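/- Let {k_{ij}}_{1≤i≤j≤n−1} be integers. There exists an alcove A = w^{-1}A_0 of the affine symmetric group arrangement of type A_{n−1} such that k_{ij} < ⟨α_{ij}, x⟩ < k_{ij} + 1 for all x ∈ A if and only if for every t with i ≤ t < j, k_{it} + k_{t+1,j} ≤ k_{ij} ≤ k_{it} + k_{t+1,j} + 1. -/

import Mathlib

open Finset

namespace Shi

private def D (k : ℕ → ℕ → ℤ) (p q : ℕ) : ℤ := k 0 q - k 0 p - k (p + 1) q

private def R (k : ℕ → ℕ → ℤ) (a b : ℕ) : Prop :=
  (a < b ∧ D k a b = 0) ∨ (b < a ∧ D k b a = 1)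

private lemma key (n : ℕ) (k : ℕ → ℕ → ℤ)
    (hk : ∀ i t j, i ≤ t → t < j → j + 2 ≤ n →
      k i t + k (t + 1) j ≤ k i j ∧ k i j ≤ k i t + k (t + 1) j + 1)
    {p q r : ℕ} (hpq : p < q) (hqr : q < r) (hr : r + 2 ≤ n) :
    (D k p q = 0 ∨ D k p q = 1) ∧ (D k q r = 0 ∨ D k q r = 1) ∧
    (D k p r = 0 ∨ D k p r = 1) ∧
    (D k p r = D k p q + D k q r ∨ D k p r = D k p q + D k q r - 1) := by
  have h1 := hk 0 p q (Nat.zero_le _) hpq (by omega)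
  have h2 := hk 0 q r (Nat.zero_le _) hqr hr
  have h3 := hk 0 p r (Nat.zero_le _) (hpq.trans hqr) hr
  have h4 := hk (p + 1) q r hpq hqr hr
  simp only [D]
  omega

private lemma hDmem (n : ℕ) (k : ℕ → ℕ → ℤ)
    (hk : ∀ i t j, i ≤ t → t < j → j + 2 ≤ n →
      k i t + k (t + 1) j ≤ k i j ∧ k i j ≤ k i t + k (t + 1) j + 1)
    {p q : ℕ} (hpq : p < q) (hq : q + 2 ≤ n) :
    D k p q = 0 ∨ D k p q = 1 := by
  have := hk 0 p q (Nat.zero_le _) hpq hq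
  simp only [D]; omega

private lemma Rirrefl (k : ℕ → ℕ → ℤ) (a : ℕ) : ¬ R k a a := by
  simp [R]

private lemma Rasym (k : ℕ → ℕ → ℤ) {a b : ℕ} (h1 : R k a b) (h2 : R k b a) : False := by
  simp only [R] at h1 h2
  omega

private lemma Rtrans (n : ℕ) (k : ℕ → ℕ → ℤ)
    (hk : ∀ i t j, i ≤ t → t < j → j + 2 ≤ n →
      k i t + k (t + 1) j ≤ k i j ∧ k i j ≤ k i t + k (t + 1) j + 1)
    {a b c : ℕ} (ha : a + 2 ≤ n) (hb : b + 2 ≤ n) (hc : c + 2 ≤ n)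
    (hac : a ≠ c) (h1 : R k a b) (h2 : R k b c) : R k a c := by
  simp only [R] at h1 h2 ⊢
  rcases h1 with ⟨hab, e1⟩ | ⟨hba, e1⟩ <;> rcases h2 with ⟨hbc, e2⟩ | ⟨hcb, e2⟩
  · obtain ⟨K1, K2, K3, K4⟩ := key n k hk hab hbc hc
    omega
  · rcases Nat.lt_trichotomy a c with h | h | h
    · obtain ⟨K1, K2, K3, K4⟩ := key n k hk h hcb hb
      omega
    · omega
    · obtain ⟨K1, K2, K3, K4⟩ := key n k hk h hab hb
      omega
  · rcases Nat.lt_trichotomy a c with h | h | h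
    · obtain ⟨K1, K2, K3, K4⟩ := key n k hk hba h hc
      omega
    · omega
    · obtain ⟨K1, K2, K3, K4⟩ := key n k hk hbc h ha
      omega
  · obtain ⟨K1, K2, K3, K4⟩ := key n k hk hcb hba ha
    omega

/-- there is an alcove with Shi coordinates `k_{ij}` iff the coordinates
satisfy Shi's inequalities. -/
theorem alcove_coords_iff (n : ℕ) (hn : 2 ≤ n) (k : ℕ → ℕ → ℤ) :
    (∃ x : ℕ → ℝ, (∑ i ∈ Finset.range n, x i = 0) ∧
      ∀ i j, i ≤ j → j + 2 ≤ n →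
        (k i j : ℝ) < x i - x (j + 1) ∧ x i - x (j + 1) < (k i j : ℝ) + 1) ↔
    (∀ i t j, i ≤ t → t < j → j + 2 ≤ n →
      k i t + k (t + 1) j ≤ k i j ∧ k i j ≤ k i t + k (t + 1) j + 1) := by
  constructor
  · rintro ⟨x, -, hx⟩ i t j hit htj hjn
    obtain ⟨a1, a2⟩ := hx i t hit (by omega)
    obtain ⟨b1, b2⟩ := hx (t + 1) j htj hjn
    obtain ⟨c1, c2⟩ := hx i j (hit.trans htj.le) hjn
    constructor
    · have h : ((k i t + k (t + 1) j : ℤ) : ℝ) < ((k i j + 1 : ℤ) : ℝ) := by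
        push_cast; linarith
      have := Int.cast_lt.mp h
      omega
    · have h : ((k i j : ℤ) : ℝ) < ((k i t + k (t + 1) j + 2 : ℤ) : ℝ) := by
        push_cast; linarith
      have := Int.cast_lt.mp h
      omega
  · intro hk
    classical
    set rank : ℕ → ℕ := fun a => ((range (n - 1)).filter (fun b => R k b a)).card with hrank
    set c : ℕ → ℝ := fun a => ((rank a : ℝ) + 1) / n with hcdef
    have hn0 : (0 : ℝ) < n := by positivity
    have hcpos : ∀ a, 0 < c a := by
      intro a
      rw [hcdef]
      positivity
    have hclt1 : ∀ a, a + 2 ≤ n → c a < 1 := by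
      intro a ha
      have hsub : (range (n - 1)).filter (fun b => R k b a) ⊆ (range (n - 1)).erase a := by
        intro b hb
        simp only [mem_filter, mem_erase, mem_range] at hb ⊢
        refine ⟨?_, hb.1⟩
        rintro rfl
        exact Rirrefl k _ hb.2
      have h1 : rank a ≤ n - 2 := by
        have h2 := card_le_card hsub
        rw [card_erase_of_mem (by simp only [mem_range]; omega), card_range] at h2
        simpa [hrank] using by omega
      have h3 : (rank a : ℝ) + 1 < n := by
        have : rank a + 1 < n := by omega
        exact_mod_cast this
      rw [hcdef]
      rw [div_lt_one hn0]
      linarith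
    have hmono : ∀ a b, a + 2 ≤ n → b + 2 ≤ n → R k a b → c a < c b := by
      intro a b ha hb hab
      have hcard : rank a < rank b := by
        apply card_lt_card
        constructor
        · intro b' hb'
          simp only [mem_filter, mem_range] at hb' ⊢
          refine ⟨hb'.1, ?_⟩
          have hb'n : b' + 2 ≤ n := by omega
          have hne : b' ≠ b := by
            rintro rfl
            exact Rasym k hab hb'.2
          exact Rtrans n k hk hb'n ha hb hne hb'.2 hab
        · intro hsub
          have hamem : a ∈ (range (n - 1)).filter (fun b' => R k b' b) := by
            simp only [mem_filter, mem_range]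
            exact ⟨by omega, hab⟩
          have := hsub hamem
          simp only [mem_filter] at this
          exact Rirrefl k a this.2
      rw [hcdef]
      have h1 : (rank a : ℝ) < (rank b : ℝ) := by exact_mod_cast hcard
      apply div_lt_div_of_pos_right (by linarith) hn0
    -- the construction
    set y : ℕ → ℝ := fun m => if m = 0 then 0 else -((k 0 (m - 1) : ℝ) + c (m - 1)) with hy
    set S : ℝ := (∑ i ∈ Finset.range n, y i) / n with hS
    refine ⟨fun m => y m - S, ?_, ?_⟩
    · rw [Finset.sum_sub_distrib, Finset.sum_const, card_range, nsmul_eq_mul, hS]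
      field_simp
      simp
    · intro i j hij hjn
      have hdiff : (fun m => y m - S) i - (fun m => y m - S) (j + 1) = y i - y (j + 1) := by
        simp only; ring
      rw [hdiff]
      have hyj : y (j + 1) = -((k 0 j : ℝ) + c j) := by
        rw [hy]
        simp
      have hcj0 : 0 < c j := hcpos j
      have hcj1 : c j < 1 := hclt1 j (by omega)
      rcases i with _ | m
      ·
        have hy0 : y 0 = 0 := by rw [hy]; simp
        rw [hy0, hyj]
        constructor <;> linarith
      · have hym : y (m + 1) = -((k 0 m : ℝ) + c m) := by
          rw [hy]
          simp
        rw [hym, hyj]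
        have hmj : m < j := by omega
        have hcm0 : 0 < c m := hcpos m
        have hcm1 : c m < 1 := hclt1 m (by omega)
        rcases hDmem n k hk hmj hjn with h | h
        · have hcmj : c m < c j := by
            apply hmono m j (by omega) (by omega)
            exact Or.inl ⟨hmj, h⟩
          simp only [D] at h
          have h' : (k 0 j : ℝ) - k 0 m - k (m + 1) j = 0 := by exact_mod_cast h
          constructor <;> linarith
        · have hcjm : c j < c m := by
            apply hmono j m (by omega) (by omega)
            exact Or.inr ⟨hmj, h⟩
          simp only [D] at h
          have h' : (k 0 j : ℝ) - k 0 m - k (m + 1) j = 1 := by exact_mod_cast h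
          constructor <;> linarith

end Shi
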